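/- arXiv:1905.10041 — 2 statements merged into one kernel-verified Lean document; each statement's English description precedes it below -/
import Mathlib

section
/- Let σ > 0 and B > 0 with ⟨ψ(x), ψ(x)⟩ ≤ B for all x ∈ X, and set C₃ = 8B / log(1 + B·σ⁻²). Let h(x) = ⟨w_h, ψ(x)⟩ for some w_h ∈ H′, let g : X → ℝ satisfy |g(x)| ≤ G·σ for all x ∈ X with G ≥ 0, and set f = h − g. Let x* ∈ X satisfy f(x*) ≥ f(x) for all x ∈ X. Suppose points x₁, …, x_T ∈ X are chosen so that x*, x₁, …, x_T are pairwise distinct and for every t ∈ {1,…,T}, x_t maximizes the acquisition function, i.e. m̂_{t−1}(x_t) + ‖w_h‖·σ̂_{t−1}(x_t) ≥ m̂_{t−1}(x) + ‖w_h‖·σ̂_{t−1}(x) for all x ∈ X. If γ ∈ ℝ satisfies (1/2)·log det(I_T + σ⁻² K_T) ≤ γ, where K_T is the Gram matrix (k(x_i,x_j))_{i,j≤T} of the selected points, then Σ_{t=1}^T (f(x*) − f(x_t)) ≤ ‖w_h‖·√(T·C₃·γ) + 2T·(‖w_h‖ + G)·σ, and f(x*) − max_{1≤t≤T} f(x_t)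 ≤ ‖w_h‖·√(C₃·γ/T) + 2·(‖w_h‖ + G)·σ. -/
open scoped RealInnerProductSpace
open Matrix

noncomputable section

variable {X : Type*} {H : Type*} {H' : Type*}
  [NormedAddCommGroup H] [InnerProductSpace ℝ H]
  [NormedAddCommGroup H'] [InnerProductSpace ℝ H']

/-- The kernel associated with the feature map `φ`: `k(x,y) = ⟪φ(x), φ(y)⟫`. -/
def ker (φ : X → H) (x y : X) : ℝ := ⟪φ x, φ y⟫

/-- Gram matrix of the points `xs`. -/
def gram (φ : X → H) {t : ℕ} (xs : Fin t → X) : Matrix (Fin t) (Fin t) ℝ :=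
  Matrix.of fun i j => ker φ (xs i) (xs j)

/-- The vector `k_t(a) = (k(a,x₁),…,k(a,x_t))ᵀ`. -/
def kvec (φ : X → H) {t : ℕ} (xs : Fin t → X) (a : X) : Fin t → ℝ :=
  fun i => ker φ a (xs i)

/-- Regularized mean prediction `m̂_t(a) = k_t(a)ᵀ (K_t + σ²I)⁻¹ (h(x₁),…,h(x_t))ᵀ`. -/
def rmeanFn (σ : ℝ) (φ : X → H) (hfun : X → ℝ) {t : ℕ} (xs : Fin t → X) (a : X) : ℝ :=
  kvec φ xs a ⬝ᵥ ((gram φ xs + σ ^ 2 • 1)⁻¹ *ᵥ (fun i => hfun (xs i)))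

/-- Regularized variance `σ̂_t²(a) = k(a,a) − k_t(a)ᵀ (K_t + σ²I)⁻¹ k_t(a)`. -/
def rvarFn (σ : ℝ) (φ : X → H) {t : ℕ} (xs : Fin t → X) (a : X) : ℝ :=
  ker φ a a - kvec φ xs a ⬝ᵥ ((gram φ xs + σ ^ 2 • 1)⁻¹ *ᵥ kvec φ xs a)

/-- `σ̂_t(a) = √(σ̂_t²(a))`. -/
def rsigmaFn (σ : ℝ) (φ : X → H) {t : ℕ} (xs : Fin t → X) (a : X) : ℝ :=
  Real.sqrt (rvarFn σ φ xs a)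

/-- The first `t` points of the sequence `x` (0-indexed: indices `< t`). -/
def prevPts {T : ℕ} (x : Fin T → X) (t : Fin T) : Fin t.val → X :=
  fun j => x ⟨j.val, j.isLt.trans t.isLt⟩

lemma dot_gram (φ : X → H) {t : ℕ} (xs : Fin t → X) (c d : Fin t → ℝ) :
    c ⬝ᵥ (gram φ xs *ᵥ d) = ⟪∑ i, c i • φ (xs i), ∑ j, d j • φ (xs j)⟫ := by
  rw [sum_inner]
  simp only [inner_sum, real_inner_smul_left, real_inner_smul_right, dotProduct, mulVec, _root_.gram,
    Matrix.of_apply, ker, Finset.mul_sum, mul_assoc]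
  exact Finset.sum_congr rfl fun i _ => Finset.sum_congr rfl fun j _ => by ring

lemma dot_kvec (φ : X → H) {t : ℕ} (xs : Fin t → X) (a : X) (c : Fin t → ℝ) :
    c ⬝ᵥ kvec φ xs a = ⟪∑ i, c i • φ (xs i), φ a⟫ := by
  rw [sum_inner]
  simp only [kvec, ker, dotProduct, real_inner_smul_left]
  exact Finset.sum_congr rfl fun i _ => by rw [real_inner_comm]

lemma gram_posSemidef (φ : X → H) {t : ℕ} (xs : Fin t → X) : (gram φ xs).PosSemidef := by
  rw [Matrix.posSemidef_iff_dotProduct_mulVec]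
  constructor
  · ext i j
    simp [Matrix.IsHermitian, _root_.gram, ker, Matrix.conjTranspose_apply, real_inner_comm (φ (xs i))]
  · intro c
    simp only [star_trivial]
    rw [dot_gram]
    exact real_inner_self_nonneg

lemma regMatrix_posDef (φ : X → H) {σ : ℝ} (hσ : 0 < σ) {t : ℕ} (xs : Fin t → X) :
    (gram φ xs + σ ^ 2 • 1).PosDef := by
  apply Matrix.PosDef.posSemidef_add (gram_posSemidef φ xs)
  rw [Matrix.smul_one_eq_diagonal]
  exact Matrix.PosDef.diagonal fun _ => by positivity

lemma dot_reg (φ : X → H) (σ : ℝ) {t : ℕ} (xs : Fin t → X) (c d : Fin t → ℝ) :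
    c ⬝ᵥ ((gram φ xs + σ ^ 2 • 1) *ᵥ d) = c ⬝ᵥ (gram φ xs *ᵥ d) + σ ^ 2 * (c ⬝ᵥ d) := by
  rw [Matrix.add_mulVec, dotProduct_add, Matrix.smul_mulVec, Matrix.one_mulVec,
    dotProduct_smul, smul_eq_mul]

lemma reg_mulVec_inv (φ : X → H) {σ : ℝ} (hσ : 0 < σ) {t : ℕ} (xs : Fin t → X) (v : Fin t → ℝ) :
    (gram φ xs + σ ^ 2 • 1) *ᵥ ((gram φ xs + σ ^ 2 • 1)⁻¹ *ᵥ v) = v := by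
  rw [Matrix.mulVec_mulVec, Matrix.mul_nonsing_inv _
    ((Matrix.isUnit_iff_isUnit_det _).mp (regMatrix_posDef φ hσ xs).isUnit), Matrix.one_mulVec]

lemma rvar_key (φ : X → H) {σ : ℝ} (hσ : 0 < σ) {t : ℕ} (xs : Fin t → X) (a : X) :
    rvarFn σ φ xs a =
      ‖φ a - ∑ i, ((gram φ xs + σ ^ 2 • 1)⁻¹ *ᵥ kvec φ xs a) i • φ (xs i)‖ ^ 2 +
        σ ^ 2 * (∑ i, (((gram φ xs + σ ^ 2 • 1)⁻¹ *ᵥ kvec φ xs a) i) ^ 2) := by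
  set c := (gram φ xs + σ ^ 2 • 1)⁻¹ *ᵥ kvec φ xs a with hc
  have hMc : c ⬝ᵥ ((gram φ xs + σ ^ 2 • 1) *ᵥ c) = c ⬝ᵥ kvec φ xs a := by
    rw [hc, reg_mulVec_inv φ hσ]
  rw [dot_reg] at hMc
  have hsq : ∑ i, (c i) ^ 2 = c ⬝ᵥ c := by
    simp [dotProduct, sq]
  have hns : ‖φ a - ∑ i, c i • φ (xs i)‖ ^ 2 =
      ‖φ a‖ ^ 2 - 2 * ⟪φ a, ∑ i, c i • φ (xs i)⟫ + ‖∑ i, c i • φ (xs i)‖ ^ 2 :=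
    norm_sub_sq_real _ _
  have h1 : (⟪φ a, ∑ i, c i • φ (xs i)⟫ : ℝ) = c ⬝ᵥ kvec φ xs a := by
    rw [real_inner_comm, ← dot_kvec]
  have h2 : ‖∑ i, c i • φ (xs i)‖ ^ 2 = c ⬝ᵥ (gram φ xs *ᵥ c) := by
    rw [dot_gram, real_inner_self_eq_norm_sq]
  have h3 : rvarFn σ φ xs a = ker φ a a - c ⬝ᵥ kvec φ xs a := by
    rw [rvarFn, dotProduct_comm]
  have h4 : ker φ a a = ‖φ a‖ ^ 2 := real_inner_self_eq_norm_sq (φ a)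
  rw [h3, hns, h1, h2, hsq, h4]
  linarith

lemma rvar_nonneg (φ : X → H) {σ : ℝ} (hσ : 0 < σ) {t : ℕ} (xs : Fin t → X) (a : X) :
    0 ≤ rvarFn σ φ xs a := by
  rw [rvar_key φ hσ]
  positivity

lemma rvar_le_ker (φ : X → H) {σ : ℝ} (hσ : 0 < σ) {t : ℕ} (xs : Fin t → X) (a : X) :
    rvarFn σ φ xs a ≤ ker φ a a := by
  have h := ((regMatrix_posDef φ hσ xs).inv).posSemidef.dotProduct_mulVec_nonneg (kvec φ xs a)
  rw [star_trivial] at h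
  rw [rvarFn]
  linarith

lemma reg_inv_symm (φ : X → H) (σ : ℝ) {t : ℕ} (xs : Fin t → X) :
    ((gram φ xs + σ ^ 2 • 1)⁻¹)ᵀ = (gram φ xs + σ ^ 2 • 1)⁻¹ := by
  have h : (gram φ xs + σ ^ 2 • 1).IsHermitian :=
    (gram_posSemidef φ xs).1.add (by
      rw [Matrix.smul_one_eq_diagonal]; exact Matrix.isHermitian_diagonal _)
  have := h.inv
  simpa [Matrix.IsHermitian] using this

lemma rmean_eq (φ : X → H) (σ : ℝ) (hfun : X → ℝ) {t : ℕ} (xs : Fin t → X) (a : X) :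
    rmeanFn σ φ hfun xs a =
      ((gram φ xs + σ ^ 2 • 1)⁻¹ *ᵥ kvec φ xs a) ⬝ᵥ (fun i => hfun (xs i)) := by
  rw [rmeanFn, Matrix.dotProduct_mulVec, ← Matrix.mulVec_transpose, reg_inv_symm]

lemma dot_gram_psi [DecidableEq X] (φ : X → H) (ψ : X → H') {σ : ℝ}
    (hker : ∀ a b : X, (⟪ψ a, ψ b⟫ : ℝ) = ⟪φ a, φ b⟫ + σ ^ 2 * (if a = b then 1 else 0))
    {t : ℕ} {xs : Fin t → X} (hxs : Function.Injective xs) (c d : Fin t → ℝ) :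
    (⟪∑ i, c i • ψ (xs i), ∑ j, d j • ψ (xs j)⟫ : ℝ)
      = c ⬝ᵥ (gram φ xs *ᵥ d) + σ ^ 2 * (c ⬝ᵥ d) := by
  have hd : ∀ i j : Fin t, (if xs i = xs j then (1:ℝ) else 0) = if i = j then 1 else 0 := by
    intro i j
    by_cases h : i = j
    · simp [h]
    · rw [if_neg h, if_neg fun hh => h (hxs hh)]
  rw [sum_inner]
  simp only [inner_sum, real_inner_smul_left, real_inner_smul_right, hker, hd]
  rw [dotProduct, dotProduct, Finset.mul_sum, ← Finset.sum_add_distrib]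
  refine Finset.sum_congr rfl fun i _ => ?_
  simp only [mulVec, dotProduct, _root_.gram, Matrix.of_apply, ker, Finset.mul_sum, mul_ite, mul_one,
    mul_zero, mul_add]
  rw [Finset.sum_add_distrib, Finset.sum_ite_eq Finset.univ i fun j => d j * (c i * σ ^ 2)]
  simp only [Finset.mem_univ, if_true]
  refine congrArg₂ (· + ·) (Finset.sum_congr rfl fun j _ => by ring) (by ring)

lemma conf_bound [DecidableEq X] (φ : X → H) (ψ : X → H') {σ : ℝ} (hσ : 0 < σ)
    (hker : ∀ a b : X, (⟪ψ a, ψ b⟫ : ℝ) = ⟪φ a, φ b⟫ + σ ^ 2 * (if a = b then 1 else 0))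
    (wh : H') (hfun : X → ℝ) (hh : ∀ a, hfun a = ⟪wh, ψ a⟫)
    {t : ℕ} {xs : Fin t → X} (hxs : Function.Injective xs) (a : X) (ha : ∀ i, xs i ≠ a) :
    |hfun a - rmeanFn σ φ hfun xs a| ≤ ‖wh‖ * Real.sqrt (rvarFn σ φ xs a + σ ^ 2) := by
  set c := (gram φ xs + σ ^ 2 • 1)⁻¹ *ᵥ kvec φ xs a with hcdef
  have hMc : c ⬝ᵥ (gram φ xs *ᵥ c) + σ ^ 2 * (c ⬝ᵥ c) = c ⬝ᵥ kvec φ xs a := by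
    rw [← dot_reg, hcdef, reg_mulVec_inv φ hσ]
  have hdiff : hfun a - rmeanFn σ φ hfun xs a = ⟪wh, ψ a - ∑ i, c i • ψ (xs i)⟫ := by
    rw [rmean_eq, hh, inner_sub_right, inner_sum]
    simp only [real_inner_smul_right]
    congr 1
    rw [dotProduct]
    exact Finset.sum_congr rfl fun i _ => by rw [hh]
  have e2 : (⟪ψ a, ∑ i, c i • ψ (xs i)⟫ : ℝ) = c ⬝ᵥ kvec φ xs a := by
    rw [inner_sum, dotProduct]
    refine Finset.sum_congr rfl fun i _ => ?_
    rw [real_inner_smul_right, hker a (xs i), if_neg fun h => ha i h.symm]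
    simp [kvec, ker, mul_comm]
  have e1 : (⟪ψ a, ψ a⟫ : ℝ) = ker φ a a + σ ^ 2 := by rw [hker, if_pos rfl, mul_one]; rfl
  have e3 := dot_gram_psi φ ψ hker hxs c c
  have hnorm : ‖ψ a - ∑ i, c i • ψ (xs i)‖ ^ 2 = rvarFn σ φ xs a + σ ^ 2 := by
    rw [norm_sub_sq_real, ← real_inner_self_eq_norm_sq, ← real_inner_self_eq_norm_sq,
      e1, e2, e3, hMc]
    have : rvarFn σ φ xs a = ker φ a a - c ⬝ᵥ kvec φ xs a := by
      rw [rvarFn, dotProduct_comm]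
    rw [this]
    ring
  rw [hdiff]
  calc |(⟪wh, ψ a - ∑ i, c i • ψ (xs i)⟫ : ℝ)| ≤ ‖wh‖ * ‖ψ a - ∑ i, c i • ψ (xs i)‖ :=
        abs_real_inner_le_norm _ _
    _ = ‖wh‖ * Real.sqrt (rvarFn σ φ xs a + σ ^ 2) := by
        rw [← hnorm, Real.sqrt_sq (norm_nonneg _)]

lemma ker_comm (φ : X → H) (a b : X) : ker φ a b = ker φ b a := real_inner_comm _ _

lemma det_reg_succ (φ : X → H) {σ : ℝ} (hσ : 0 < σ) {n : ℕ} (xs : Fin (n + 1) → X) :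
    (gram φ xs + σ ^ 2 • 1).det =
      (gram φ (xs ∘ Fin.castSucc) + σ ^ 2 • 1).det *
        (σ ^ 2 + rvarFn σ φ (xs ∘ Fin.castSucc) (xs (Fin.last n))) := by
  set ys : Fin n → X := xs ∘ Fin.castSucc with hys
  set a : X := xs (Fin.last n) with ha
  set A : Matrix (Fin n) (Fin n) ℝ := gram φ ys + σ ^ 2 • 1 with hA
  set k : Fin n → ℝ := kvec φ ys a with hk
  have hsub : (gram φ xs + σ ^ 2 • 1).submatrix finSumFinEquiv finSumFinEquiv =
      Matrix.fromBlocks A (fun i (_ : Fin 1) => k i) (fun (_ : Fin 1) j => k j)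
        (fun _ _ => ker φ a a + σ ^ 2) := by
    ext i j
    cases i with
    | inl i =>
      cases j with
      | inl j =>
        simp only [Matrix.submatrix_apply, Matrix.fromBlocks_apply₁₁, finSumFinEquiv_apply_left,
          Matrix.add_apply, Matrix.smul_apply, Matrix.one_apply, hA, _root_.gram, Matrix.of_apply]
        have : (Fin.castAdd 1 i = Fin.castAdd 1 j) ↔ (i = j) := by
          constructor
          · intro h; exact Fin.ext (by simpa [Fin.ext_iff] using h)
          · rintro rfl; rfl
        simp only [this, hys]
        rfl
      | inr j =>
        simp only [Matrix.submatrix_apply, Matrix.fromBlocks_apply₁₂, finSumFinEquiv_apply_left,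
          finSumFinEquiv_apply_right, Matrix.add_apply, Matrix.smul_apply, Matrix.one_apply]
        have hne : Fin.castAdd 1 i ≠ Fin.natAdd n j := by
          intro h
          have h2 := congrArg Fin.val h
          have := i.isLt
          simp only [Fin.coe_castAdd, Fin.coe_natAdd] at h2
          omega
        rw [if_neg hne]
        have hj : Fin.natAdd n j = Fin.last n := by
          apply Fin.ext
          have := j.isLt
          simp only [Fin.coe_natAdd, Fin.val_last]
          omega
        rw [hj]
        simp only [hk, kvec, _root_.gram, Matrix.of_apply, smul_zero, add_zero, ← ha]
        exact ker_comm φ _ _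
    | inr i =>
      cases j with
      | inl j =>
        simp only [Matrix.submatrix_apply, Matrix.fromBlocks_apply₂₁, finSumFinEquiv_apply_left,
          finSumFinEquiv_apply_right, Matrix.add_apply, Matrix.smul_apply, Matrix.one_apply]
        have hne : Fin.natAdd n i ≠ Fin.castAdd 1 j := by
          intro h
          have h2 := congrArg Fin.val h
          have := j.isLt
          simp only [Fin.coe_castAdd, Fin.coe_natAdd] at h2
          omega
        rw [if_neg hne]
        have hi : Fin.natAdd n i = Fin.last n := by
          apply Fin.ext
          have := i.isLt
          simp only [Fin.coe_natAdd, Fin.val_last]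
          omega
        rw [hi]
        simp only [hk, kvec, _root_.gram, Matrix.of_apply, smul_zero, add_zero, ← ha]
        rfl
      | inr j =>
        simp only [Matrix.submatrix_apply, Matrix.fromBlocks_apply₂₂,
          finSumFinEquiv_apply_right, Matrix.add_apply, Matrix.smul_apply, Matrix.one_apply]
        have hi : Fin.natAdd n i = Fin.last n := by
          apply Fin.ext
          have := i.isLt
          simp only [Fin.coe_natAdd, Fin.val_last]
          omega
        have hj : Fin.natAdd n j = Fin.last n := by
          apply Fin.ext
          have := j.isLt
          simp only [Fin.coe_natAdd, Fin.val_last]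
          omega
        rw [hi, hj, if_pos rfl]
        simp only [_root_.gram, Matrix.of_apply, smul_eq_mul, mul_one, ← ha]
        rfl
  have hAunit : IsUnit A := (regMatrix_posDef φ hσ ys).isUnit
  haveI : Invertible A := hAunit.invertible
  rw [← Matrix.det_submatrix_equiv_self finSumFinEquiv (gram φ xs + σ ^ 2 • 1), hsub]
  erw [Matrix.det_fromBlocks₁₁]
  congr 1
  rw [Matrix.det_fin_one, Matrix.invOf_eq_nonsing_inv]
  show ker φ a a + σ ^ 2 - ∑ i, (∑ j', k j' * A⁻¹ j' i) * k i = σ ^ 2 + rvarFn σ φ ys a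
  have hrv : rvarFn σ φ ys a = ker φ a a - k ⬝ᵥ (A⁻¹ *ᵥ k) := rfl
  have hsw : k ⬝ᵥ (A⁻¹ *ᵥ k) = ∑ i, (∑ j', k j' * A⁻¹ j' i) * k i := by
    simp only [dotProduct, mulVec, Finset.mul_sum, Finset.sum_mul]
    rw [Finset.sum_comm]
    exact Finset.sum_congr rfl fun i _ => Finset.sum_congr rfl fun j _ => by ring
  rw [hrv]
  rw [← hsw]
  ring

lemma det_reg_prod (φ : X → H) {σ : ℝ} (hσ : 0 < σ) :
    ∀ {n : ℕ} (xs : Fin n → X),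
      (gram φ xs + σ ^ 2 • 1).det =
        ∏ t : Fin n, (σ ^ 2 + rvarFn σ φ (fun j : Fin t.val => xs (Fin.castLE t.isLt.le j)) (xs t))
  | 0, xs => by simp [Matrix.det_fin_zero]
  | n + 1, xs => by
    rw [det_reg_succ φ hσ xs, det_reg_prod φ hσ (xs ∘ Fin.castSucc), Fin.prod_univ_castSucc]
    congr 1

lemma det_one_add (φ : X → H) {σ : ℝ} (hσ : 0 < σ) {n : ℕ} (xs : Fin n → X) :
    (1 + (σ ^ 2)⁻¹ • gram φ xs).det =
      ∏ t : Fin n,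
        (1 + (σ ^ 2)⁻¹ * rvarFn σ φ (fun j : Fin t.val => xs (Fin.castLE t.isLt.le j)) (xs t)) := by
  have hσ2 : (σ : ℝ) ^ 2 ≠ 0 := by positivity
  have h1 : (1 + (σ ^ 2)⁻¹ • gram φ xs) = (σ ^ 2)⁻¹ • (gram φ xs + σ ^ 2 • 1) := by
    rw [smul_add, smul_smul, inv_mul_cancel₀ hσ2, one_smul, add_comm]
  rw [h1, Matrix.det_smul, det_reg_prod φ hσ]
  rw [show ((σ ^ 2)⁻¹ : ℝ) ^ Fintype.card (Fin n) = ∏ _t : Fin n, ((σ ^ 2)⁻¹ : ℝ) by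
    rw [Finset.prod_const, Finset.card_univ]]
  rw [← Finset.prod_mul_distrib]
  refine Finset.prod_congr rfl fun t _ => ?_
  field_simp

lemma sum_log_le (φ : X → H) {σ : ℝ} (hσ : 0 < σ) {n : ℕ} (xs : Fin n → X) {γ : ℝ}
    (hγ : (1/2) * Real.log ((1 + (σ ^ 2)⁻¹ • gram φ xs).det) ≤ γ) :
    ∑ t : Fin n,
        Real.log (1 + (σ ^ 2)⁻¹ * rvarFn σ φ (fun j : Fin t.val => xs (Fin.castLE t.isLt.le j)) (xs t))
      ≤ 2 * γ := by
  have hpos : ∀ t : Fin n,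
      (0:ℝ) < 1 + (σ ^ 2)⁻¹ * rvarFn σ φ (fun j : Fin t.val => xs (Fin.castLE t.isLt.le j)) (xs t) := by
    intro t
    have := rvar_nonneg φ hσ (fun j : Fin t.val => xs (Fin.castLE t.isLt.le j)) (xs t)
    have h2 : (0:ℝ) < (σ ^ 2)⁻¹ := by positivity
    nlinarith
  have := Real.log_prod (s := Finset.univ)
    (f := fun t : Fin n => 1 + (σ ^ 2)⁻¹ * rvarFn σ φ (fun j : Fin t.val => xs (Fin.castLE t.isLt.le j)) (xs t))
    (fun t _ => (hpos t).ne')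
  rw [← this, ← det_one_add φ hσ xs]
  linarith

lemma scalar_bound {σ B s : ℝ} (hσ : 0 < σ) (hB : 0 < B) (hs0 : 0 ≤ s) (hsB : s ≤ B) :
    s ≤ (B / Real.log (1 + B * (σ ^ 2)⁻¹)) * Real.log (1 + (σ ^ 2)⁻¹ * s) := by
  set c := ((σ : ℝ) ^ 2)⁻¹ with hc
  have hcpos : 0 < c := by positivity
  have hL : 0 < Real.log (1 + B * c) := Real.log_pos (by nlinarith)
  have hber : ((1 + B * c) ^ (s / B) : ℝ) ≤ 1 + c * s := by
    have h := rpow_one_add_le_one_add_mul_self (s := B * c) (by nlinarith)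
      (p := s / B) (by positivity) (by rw [div_le_one hB]; exact hsB)
    calc ((1 + B * c) ^ (s / B) : ℝ) ≤ 1 + s / B * (B * c) := h
      _ = 1 + c * s := by field_simp
  have hlog : (s / B) * Real.log (1 + B * c) ≤ Real.log (1 + c * s) := by
    rw [← Real.log_rpow (by nlinarith)]
    exact Real.log_le_log (by positivity) hber
  rw [div_mul_eq_mul_div, le_div_iff₀ hL]
  rw [div_mul_eq_mul_div] at hlog
  have h3 := (div_le_iff₀ hB).mp hlog
  linarith

lemma sqrt_add_le' {u v : ℝ} (hu : 0 ≤ u) (hv : 0 ≤ v) :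
    Real.sqrt (u + v) ≤ Real.sqrt u + Real.sqrt v := by
  have h : u + v ≤ (Real.sqrt u + Real.sqrt v) ^ 2 := by
    have h1 := Real.sq_sqrt hu
    have h2 := Real.sq_sqrt hv
    nlinarith [Real.sqrt_nonneg u, Real.sqrt_nonneg v]
  calc Real.sqrt (u + v) ≤ Real.sqrt ((Real.sqrt u + Real.sqrt v) ^ 2) := Real.sqrt_le_sqrt h
    _ = Real.sqrt u + Real.sqrt v := Real.sqrt_sq (by positivity)


/-- Theorem 3 (perturbation-setting sequential regret bounds). -/
theorem statement_2 [Nonempty X] [DecidableEq X]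
    (φ : X → H) (ψ : X → H')
    (σ : ℝ) (hσ : 0 < σ) (B : ℝ) (hB : 0 < B)
    (hker : ∀ a b : X, (⟪ψ a, ψ b⟫ : ℝ) = ⟪φ a, φ b⟫ + σ ^ 2 * (if a = b then 1 else 0))
    (hkB : ∀ a : X, (⟪ψ a, ψ a⟫ : ℝ) ≤ B)
    (wh : H') (hfun : X → ℝ) (hh : ∀ a, hfun a = ⟪wh, ψ a⟫)
    (g : X → ℝ) (G : ℝ) (hG : 0 ≤ G) (hg : ∀ a : X, |g a| ≤ G * σ)
    (f : X → ℝ) (hfdef : ∀ a, f a = hfun a - g a)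
    (T : ℕ) (hT : 0 < T)
    (xstar : X) (hstar : ∀ a : X, f a ≤ f xstar)
    (x : Fin T → X)
    (hinj : Function.Injective x) (hne : ∀ t : Fin T, x t ≠ xstar)
    (hacq : ∀ t : Fin T, ∀ a : X,
      rmeanFn σ φ hfun (prevPts x t) a + ‖wh‖ * rsigmaFn σ φ (prevPts x t) a ≤
        rmeanFn σ φ hfun (prevPts x t) (x t) + ‖wh‖ * rsigmaFn σ φ (prevPts x t) (x t))
    (γ : ℝ)
    (hγ : (1/2) * Real.log ((1 + (σ^2)⁻¹ • gram φ x).det) ≤ γ) :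
    (∑ t : Fin T, (f xstar - f (x t))) ≤
        ‖wh‖ * Real.sqrt ((T : ℝ) * (8 * B / Real.log (1 + B * (σ^2)⁻¹)) * γ) +
          2 * (T : ℝ) * (‖wh‖ + G) * σ ∧
    f xstar - (Finset.univ.sup' (Finset.univ_nonempty_iff.mpr (Fin.pos_iff_nonempty.mp hT))
        fun t => f (x t)) ≤
      ‖wh‖ * Real.sqrt ((8 * B / Real.log (1 + B * (σ^2)⁻¹)) * γ / (T : ℝ)) +
        2 * (‖wh‖ + G) * σ := by
  have hσ2 : (0:ℝ) < σ ^ 2 := by positivity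
  set L := Real.log (1 + B * (σ ^ 2)⁻¹) with hLdef
  have hL : 0 < L := Real.log_pos (by nlinarith [inv_pos.mpr hσ2])
  set r : Fin T → ℝ := fun t => rvarFn σ φ (prevPts x t) (x t) with hrdef
  have hr0 : ∀ t, 0 ≤ r t := fun t => rvar_nonneg φ hσ _ _
  have hrB : ∀ t, r t ≤ B := by
    intro t
    have h1 := rvar_le_ker φ hσ (prevPts x t) (x t)
    have h2 := hkB (x t)
    rw [hker (x t) (x t), if_pos rfl] at h2
    have h3 : ker φ (x t) (x t) = ⟪φ (x t), φ (x t)⟫ := rfl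
    rw [← h3] at h2
    nlinarith
  have hlogsum : ∑ t : Fin T, Real.log (1 + (σ ^ 2)⁻¹ * r t) ≤ 2 * γ := sum_log_le φ hσ x hγ
  have hsum_r : ∑ t : Fin T, r t ≤ B / L * (2 * γ) := by
    have hstep : ∀ t : Fin T, r t ≤ B / L * Real.log (1 + (σ ^ 2)⁻¹ * r t) :=
      fun t => scalar_bound hσ hB (hr0 t) (hrB t)
    calc ∑ t, r t ≤ ∑ t, B / L * Real.log (1 + (σ ^ 2)⁻¹ * r t) :=
          Finset.sum_le_sum fun t _ => hstep t
      _ = B / L * ∑ t, Real.log (1 + (σ ^ 2)⁻¹ * r t) := by rw [Finset.mul_sum]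
      _ ≤ B / L * (2 * γ) := mul_le_mul_of_nonneg_left hlogsum (by positivity)
  have hγ0 : 0 ≤ γ := by
    have h0 : (0:ℝ) ≤ ∑ t : Fin T, Real.log (1 + (σ ^ 2)⁻¹ * r t) :=
      Finset.sum_nonneg fun t _ => Real.log_nonneg (by nlinarith [hr0 t, inv_pos.mpr hσ2])
    linarith
  have key : ∀ t : Fin T, f xstar - f (x t) ≤
      2 * (‖wh‖ * Real.sqrt (r t)) + (2 * (‖wh‖ * σ) + 2 * (G * σ)) := by
    intro t
    have hinjp : Function.Injective (prevPts x t) := by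
      intro i j hij
      have h := hinj hij
      simp only [Fin.mk.injEq] at h
      exact Fin.ext h
    have hne1 : ∀ i, prevPts x t i ≠ xstar := fun i => hne _
    have hne2 : ∀ i, prevPts x t i ≠ x t := by
      intro i hEq
      have hv := congrArg Fin.val (hinj hEq)
      simp only at hv
      have := i.isLt
      omega
    have c1 := abs_le.mp (conf_bound φ ψ hσ hker wh hfun hh hinjp xstar hne1)
    have c2 := abs_le.mp (conf_bound φ ψ hσ hker wh hfun hh hinjp (x t) hne2)
    have hsx : ∀ a, ‖wh‖ * Real.sqrt (rvarFn σ φ (prevPts x t) a + σ ^ 2) ≤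
        ‖wh‖ * rsigmaFn σ φ (prevPts x t) a + ‖wh‖ * σ := by
      intro a
      rw [← mul_add]
      apply mul_le_mul_of_nonneg_left _ (norm_nonneg wh)
      calc Real.sqrt (rvarFn σ φ (prevPts x t) a + σ ^ 2)
          ≤ Real.sqrt (rvarFn σ φ (prevPts x t) a) + Real.sqrt (σ ^ 2) :=
            sqrt_add_le' (rvar_nonneg φ hσ _ _) (sq_nonneg σ)
        _ = rsigmaFn σ φ (prevPts x t) a + σ := by rw [Real.sqrt_sq hσ.le]; rfl
    have b1 := hsx xstar
    have b2 := hsx (x t)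
    have hAq := hacq t xstar
    have hg1 := abs_le.mp (hg (x t))
    have hg2 := abs_le.mp (hg xstar)
    rw [hfdef, hfdef]
    have hrs : Real.sqrt (r t) = rsigmaFn σ φ (prevPts x t) (x t) := rfl
    rw [hrs]
    linarith [c1.1, c1.2, c2.1, c2.2]
  have hsumsqrt : ∑ t : Fin T, Real.sqrt (r t) ≤ Real.sqrt ((T : ℝ) * (B / L * (2 * γ))) := by
    have hsq : (∑ t, Real.sqrt (r t)) ^ 2 ≤ (T : ℝ) * ∑ t, r t := by
      have h := sq_sum_le_card_mul_sum_sq (s := Finset.univ)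
        (f := fun t : Fin T => Real.sqrt (r t))
      have h2 : ∑ t : Fin T, Real.sqrt (r t) ^ 2 = ∑ t : Fin T, r t :=
        Finset.sum_congr rfl fun t _ => Real.sq_sqrt (hr0 t)
      rw [h2, Finset.card_univ, Fintype.card_fin] at h
      exact_mod_cast h
    calc ∑ t, Real.sqrt (r t)
        = Real.sqrt ((∑ t, Real.sqrt (r t)) ^ 2) :=
          (Real.sqrt_sq (Finset.sum_nonneg fun t _ => Real.sqrt_nonneg _)).symm
      _ ≤ Real.sqrt ((T : ℝ) * (B / L * (2 * γ))) := by
          apply Real.sqrt_le_sqrt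
          calc (∑ t, Real.sqrt (r t)) ^ 2 ≤ (T : ℝ) * ∑ t, r t := hsq
            _ ≤ (T : ℝ) * (B / L * (2 * γ)) :=
              mul_le_mul_of_nonneg_left hsum_r (by positivity)
  have hC : Real.sqrt ((T : ℝ) * (8 * B / L) * γ) =
      2 * Real.sqrt ((T : ℝ) * (B / L * (2 * γ))) := by
    rw [show (T : ℝ) * (8 * B / L) * γ = 2 ^ 2 * ((T : ℝ) * (B / L * (2 * γ))) by ring]
    rw [Real.sqrt_mul (by norm_num), Real.sqrt_sq (by norm_num)]
  have main1 : (∑ t : Fin T, (f xstar - f (x t))) ≤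
      ‖wh‖ * Real.sqrt ((T : ℝ) * (8 * B / L) * γ) + 2 * (T : ℝ) * (‖wh‖ + G) * σ := by
    calc ∑ t, (f xstar - f (x t))
        ≤ ∑ t, (2 * (‖wh‖ * Real.sqrt (r t)) + (2 * (‖wh‖ * σ) + 2 * (G * σ))) :=
          Finset.sum_le_sum fun t _ => key t
      _ = 2 * ‖wh‖ * (∑ t, Real.sqrt (r t)) + (T : ℝ) * (2 * (‖wh‖ * σ) + 2 * (G * σ)) := by
          have hms : ∑ t, (2 * (‖wh‖ * Real.sqrt (r t))) = 2 * ‖wh‖ * ∑ t, Real.sqrt (r t) := by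
            rw [Finset.mul_sum]
            exact Finset.sum_congr rfl fun t _ => by ring
          rw [Finset.sum_add_distrib, hms, Finset.sum_const, Finset.card_univ, Fintype.card_fin,
            nsmul_eq_mul]
      _ ≤ 2 * ‖wh‖ * Real.sqrt ((T : ℝ) * (B / L * (2 * γ))) +
            (T : ℝ) * (2 * (‖wh‖ * σ) + 2 * (G * σ)) := by
          have := mul_le_mul_of_nonneg_left hsumsqrt
            (by positivity : (0:ℝ) ≤ 2 * ‖wh‖)
          linarith
      _ = ‖wh‖ * Real.sqrt ((T : ℝ) * (8 * B / L) * γ) + 2 * (T : ℝ) * (‖wh‖ + G) * σ := by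
          rw [hC]; ring
  refine ⟨main1, ?_⟩
  set S := (Finset.univ.sup' (Finset.univ_nonempty_iff.mpr (Fin.pos_iff_nonempty.mp hT))
    fun t => f (x t)) with hS
  have hTpos : (0:ℝ) < T := by exact_mod_cast hT
  have hTS : (T : ℝ) * (f xstar - S) ≤ ∑ t : Fin T, (f xstar - f (x t)) := by
    have hle : ∀ t ∈ Finset.univ, f xstar - S ≤ f xstar - f (x t) := by
      intro t _
      have : f (x t) ≤ S := Finset.le_sup' (fun t => f (x t)) (Finset.mem_univ t)
      linarith
    calc (T : ℝ) * (f xstar - S) = ∑ _t : Fin T, (f xstar - S) := by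
          rw [Finset.sum_const, Finset.card_univ, Fintype.card_fin, nsmul_eq_mul]
      _ ≤ ∑ t, (f xstar - f (x t)) := Finset.sum_le_sum hle
  have h3 : Real.sqrt ((T : ℝ) * (8 * B / L) * γ) / (T : ℝ) =
      Real.sqrt ((8 * B / L) * γ / (T : ℝ)) := by
    rw [show (8 * B / L) * γ / (T : ℝ) = ((T : ℝ) * (8 * B / L) * γ) / ((T : ℝ) ^ 2) by
      field_simp]
    rw [Real.sqrt_div' _ (by positivity), Real.sqrt_sq hTpos.le]
  have h2 : f xstar - S ≤
      (‖wh‖ * Real.sqrt ((T : ℝ) * (8 * B / L) * γ) + 2 * (T : ℝ) * (‖wh‖ + G) * σ) / (T : ℝ) := by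
    rw [le_div_iff₀ hTpos]
    nlinarith [hTS, main1]
  calc f xstar - S
      ≤ (‖wh‖ * Real.sqrt ((T : ℝ) * (8 * B / L) * γ) + 2 * (T : ℝ) * (‖wh‖ + G) * σ) / (T : ℝ) :=
        h2
    _ = ‖wh‖ * (Real.sqrt ((T : ℝ) * (8 * B / L) * γ) / (T : ℝ)) + 2 * (‖wh‖ + G) * σ := by
        field_simp
    _ = ‖wh‖ * Real.sqrt ((8 * B / L) * γ / (T : ℝ)) + 2 * (‖wh‖ + G) * σ := by rw [h3]
end
end

section
/- Let f(x) = ⟨w, φ(x)⟩ for some w ∈ H, let the first (n−1)L selected points x₁,…,x_{(n−1)L} have invertible Gram matrix, and let x* ∈ X satisfy f(x*) ≥ f(x) for all x ∈ X. Suppose the L-tuple X_n = (x_{(n−1)L+1}, …, x_{nL}) maximizes, over all L-tuples X = (x¹,…,x^L) of points of X, the batch acquisition (1/L)·Σ_{i=1}^L m_{(n−1)L}(xⁱ) + ‖w‖·(2·√(tr(cov_{n−1}(X,X))/L) − √(𝟙ᵀ cov_{n−1}(X,X) 𝟙 / L²)). Then (1/L)·Σ_{i=1}^L (f(x*) − f(x_{(n−1)L+i}))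 ≤ 2·‖w‖·√(tr(cov_{n−1}(X_n,X_n))/L). -/
open scoped RealInnerProductSpace
open Matrix

noncomputable section

variable {X : Type*} {H : Type*} [NormedAddCommGroup H] [InnerProductSpace ℝ H]

/-- The mean prediction `m_t(a) = k_t(a)ᵀ K_t⁻¹ (f(x₁),…,f(x_t))ᵀ`. -/
def meanFn (φ : X → H) (f : X → ℝ) {t : ℕ} (xs : Fin t → X) (a : X) : ℝ :=
  kvec φ xs a ⬝ᵥ ((gram φ xs)⁻¹ *ᵥ (fun i => f (xs i)))

/-- The variance `σ_t²(a) = k(a,a) − k_t(a)ᵀ K_t⁻¹ k_t(a)`. -/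
def varFn (φ : X → H) {t : ℕ} (xs : Fin t → X) (a : X) : ℝ :=
  ker φ a a - kvec φ xs a ⬝ᵥ ((gram φ xs)⁻¹ *ᵥ kvec φ xs a)

/-- `σ_t(a) = √(σ_t²(a))`. -/
def sigmaFn (φ : X → H) {t : ℕ} (xs : Fin t → X) (a : X) : ℝ := Real.sqrt (varFn φ xs a)

/-- The noise-free batch covariance matrix `cov(X,X)` after selecting the points `xs`. -/
def covMat (φ : X → H) {t L : ℕ} (xs : Fin t → X) (XX : Fin L → X) :
    Matrix (Fin L) (Fin L) ℝ :=
  Matrix.of fun i j =>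
    ker φ (XX i) (XX j) - kvec φ xs (XX i) ⬝ᵥ ((gram φ xs)⁻¹ *ᵥ kvec φ xs (XX j))

/-- The batch acquisition function:
`(1/L)·Σᵢ m(xⁱ) + w·(2√(tr(cov(X,X))/L) − √(𝟙ᵀ cov(X,X) 𝟙 / L²))`. -/
def batchAcq (φ : X → H) (f : X → ℝ) (wnorm : ℝ) {t L : ℕ} (xs : Fin t → X)
    (XX : Fin L → X) : ℝ :=
  (1 / (L : ℝ)) * ∑ i, meanFn φ f xs (XX i) +
    wnorm * (2 * Real.sqrt ((covMat φ xs XX).trace / (L : ℝ)) -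
      Real.sqrt ((∑ i, ∑ j, covMat φ xs XX i j) / (L : ℝ) ^ 2))

/-- residual of `φ a` after projecting onto selected points -/
def resid (φ : X → H) {t : ℕ} (xs : Fin t → X) (a : X) : H :=
  φ a - ∑ i, ((gram φ xs)⁻¹ *ᵥ kvec φ xs a) i • φ (xs i)

lemma gram_symm (φ : X → H) {t : ℕ} (xs : Fin t → X) : (gram φ xs)ᵀ = gram φ xs := by
  ext i j
  simp [_root_.gram, ker, Matrix.transpose_apply, real_inner_comm]

lemma inv_symm (φ : X → H) {t : ℕ} (xs : Fin t → X) : ((gram φ xs)⁻¹)ᵀ = (gram φ xs)⁻¹ := by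
  rw [Matrix.transpose_nonsing_inv, gram_symm]

lemma inner_sum_smul (φ : X → H) {t : ℕ} (xs : Fin t → X) (a : X) (c : Fin t → ℝ) :
    ⟪φ a, ∑ i, c i • φ (xs i)⟫ = kvec φ xs a ⬝ᵥ c := by
  rw [inner_sum]
  simp [kvec, ker, real_inner_smul_right, dotProduct, mul_comm]

lemma sum_smul_inner (φ : X → H) {t : ℕ} (xs : Fin t → X) (b : X) (c : Fin t → ℝ) :
    ⟪∑ i, c i • φ (xs i), φ b⟫ = c ⬝ᵥ kvec φ xs b := by
  rw [sum_inner]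
  simp [kvec, ker, real_inner_smul_left, real_inner_smul_right, dotProduct, real_inner_comm, mul_comm]

lemma sum_smul_inner_sum (φ : X → H) {t : ℕ} (xs : Fin t → X) (c d : Fin t → ℝ) :
    ⟪∑ i, c i • φ (xs i), ∑ j, d j • φ (xs j)⟫ = c ⬝ᵥ (gram φ xs *ᵥ d) := by
  rw [sum_inner]
  simp only [real_inner_smul_left, inner_sum, real_inner_smul_right]
  simp only [dotProduct, Matrix.mulVec, _root_.gram, ker, Matrix.of_apply, Finset.mul_sum]
  exact Finset.sum_congr rfl fun i _ => Finset.sum_congr rfl fun j _ => by ring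

lemma mulVec_inv_cancel (φ : X → H) {t : ℕ} (xs : Fin t → X) (hinv : IsUnit (gram φ xs).det)
    (v : Fin t → ℝ) : gram φ xs *ᵥ ((gram φ xs)⁻¹ *ᵥ v) = v := by
  rw [Matrix.mulVec_mulVec, Matrix.mul_nonsing_inv _ hinv, Matrix.one_mulVec]

lemma resid_inner (φ : X → H) {t : ℕ} (xs : Fin t → X) (hinv : IsUnit (gram φ xs).det)
    (a b : X) :
    ⟪resid φ xs a, resid φ xs b⟫ =
      ker φ a b - kvec φ xs a ⬝ᵥ ((gram φ xs)⁻¹ *ᵥ kvec φ xs b) := by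
  unfold resid
  rw [inner_sub_left, inner_sub_right, inner_sub_right, inner_sum_smul, sum_smul_inner,
    sum_smul_inner_sum, mulVec_inv_cancel φ xs hinv]
  simp only [ker]
  ring

lemma mean_eq (φ : X → H) (w : H) (f : X → ℝ) (hf : ∀ a, f a = ⟪w, φ a⟫)
    {t : ℕ} (xs : Fin t → X) (a : X) :
    meanFn φ f xs a = ⟪w, ∑ i, ((gram φ xs)⁻¹ *ᵥ kvec φ xs a) i • φ (xs i)⟫ := by
  rw [inner_sum]
  simp only [real_inner_smul_right]
  rw [meanFn, Matrix.dotProduct_mulVec, ← Matrix.mulVec_transpose, inv_symm]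
  simp [dotProduct, hf, mul_comm]

lemma f_sub_mean (φ : X → H) (w : H) (f : X → ℝ) (hf : ∀ a, f a = ⟪w, φ a⟫)
    {t : ℕ} (xs : Fin t → X) (a : X) :
    f a - meanFn φ f xs a = ⟪w, resid φ xs a⟫ := by
  rw [mean_eq φ w f hf, resid, inner_sub_right, hf]


/-- Lemma 4: batch per-step regret bound in the noise-free setting. -/
theorem statement_11
    (φ : X → H) (w : H) (f : X → ℝ) (hf : ∀ a, f a = ⟪w, φ a⟫)
    (n L : ℕ) (hL : 0 < L)
    (xs : Fin ((n - 1) * L) → X) (hinv : IsUnit (gram φ xs).det)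
    (xstar : X) (hstar : ∀ a : X, f a ≤ f xstar)
    (Xn : Fin L → X)
    (hacq : ∀ XX : Fin L → X, batchAcq φ f ‖w‖ xs XX ≤ batchAcq φ f ‖w‖ xs Xn) :
    (1 / (L : ℝ)) * ∑ i, (f xstar - f (Xn i)) ≤
      2 * ‖w‖ * Real.sqrt ((covMat φ xs Xn).trace / (L : ℝ)) := by
  have hLR : (0:ℝ) < L := by exact_mod_cast hL
  have hLne : (L:ℝ) ≠ 0 := ne_of_gt hLR
  set r : X → H := resid φ xs with hr
  have hcov : ∀ {M : ℕ} (XX : Fin M → X) (i j : Fin M),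
      covMat φ xs XX i j = ⟪r (XX i), r (XX j)⟫ := by
    intro M XX i j
    rw [covMat, Matrix.of_apply, ← resid_inner φ xs hinv]
  have htr : ∀ XX : Fin L → X, (covMat φ xs XX).trace = ∑ i, ‖r (XX i)‖^2 := by
    intro XX
    rw [Matrix.trace]
    simp only [Matrix.diag]
    refine Finset.sum_congr rfl fun i _ => ?_
    rw [hcov, real_inner_self_eq_norm_sq]
  have hsum : ∀ XX : Fin L → X, ∑ i, ∑ j, covMat φ xs XX i j = ‖∑ i, r (XX i)‖^2 := by
    intro XX
    simp only [hcov]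
    rw [← real_inner_self_eq_norm_sq, inner_sum]
    simp only [sum_inner]
    exact Finset.sum_comm
  -- acquisition at the constant tuple
  have hconst : batchAcq φ f ‖w‖ xs (fun _ : Fin L => xstar) =
      meanFn φ f xs xstar + ‖w‖ * ‖r xstar‖ := by
    rw [batchAcq]
    have h1 : (covMat φ xs (fun _ : Fin L => xstar)).trace = (L:ℝ) * ‖r xstar‖^2 := by
      rw [htr (fun _ : Fin L => xstar), Finset.sum_const, Finset.card_univ, Fintype.card_fin, nsmul_eq_mul]
    have h2 : (∑ i, ∑ j, covMat φ xs (fun _ : Fin L => xstar) i j) = (L:ℝ)^2 * ‖r xstar‖^2 := by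
      simp only [hcov, Finset.sum_const, Finset.card_univ, Fintype.card_fin, nsmul_eq_mul,
        real_inner_self_eq_norm_sq]
      ring
    have e1 : ((L:ℝ) * ‖r xstar‖^2) / L = ‖r xstar‖^2 := by field_simp
    have e2 : ((L:ℝ)^2 * ‖r xstar‖^2) / (L:ℝ)^2 = ‖r xstar‖^2 := by field_simp
    rw [h1, h2, e1, e2, Real.sqrt_sq (norm_nonneg _), Finset.sum_const, Finset.card_univ,
      Fintype.card_fin, nsmul_eq_mul, one_div, inv_mul_cancel_left₀ hLne]
    ring
  have hfl : f xstar ≤ batchAcq φ f ‖w‖ xs Xn := by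
    refine le_trans ?_ (hacq fun _ : Fin L => xstar)
    rw [hconst]
    have h4 := f_sub_mean φ w f hf xs xstar
    have hq : ⟪w, r xstar⟫ ≤ ‖w‖ * ‖r xstar‖ := real_inner_le_norm w _
    rw [← hr] at h4
    linarith
  have h3 : ∑ i, meanFn φ f xs (Xn i) - ∑ i, f (Xn i) ≤ ‖w‖ * ‖∑ i, r (Xn i)‖ :=
    calc ∑ i, meanFn φ f xs (Xn i) - ∑ i, f (Xn i) = - ⟪w, ∑ i, r (Xn i)⟫ := by
          rw [inner_sum, ← Finset.sum_sub_distrib, ← Finset.sum_neg_distrib]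
          refine Finset.sum_congr rfl fun i _ => ?_
          have h5 := f_sub_mean φ w f hf xs (Xn i)
          rw [← hr] at h5
          linarith
      _ ≤ |⟪w, ∑ i, r (Xn i)⟫| := neg_le_abs _
      _ ≤ ‖w‖ * ‖∑ i, r (Xn i)‖ := abs_real_inner_le_norm _ _
  have hS : Real.sqrt ((∑ i, ∑ j, covMat φ xs Xn i j) / (L:ℝ)^2) = ‖∑ i, r (Xn i)‖ / L := by
    rw [hsum, Real.sqrt_div (sq_nonneg _), Real.sqrt_sq (norm_nonneg _),
      Real.sqrt_sq hLR.le]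
  rw [batchAcq, hS] at hfl
  have hsum_eq : (1/(L:ℝ)) * ∑ i, (f xstar - f (Xn i)) =
      f xstar - (1/(L:ℝ)) * ∑ i, f (Xn i) := by
    rw [Finset.sum_sub_distrib, Finset.sum_const, Finset.card_univ, Fintype.card_fin,
      nsmul_eq_mul]
    field_simp
  rw [hsum_eq]
  have h3' := mul_le_mul_of_nonneg_left h3 (by positivity : (0:ℝ) ≤ 1/(L:ℝ))
  have hwN : (1/(L:ℝ)) * (‖w‖ * ‖∑ i, r (Xn i)‖) = ‖w‖ * (‖∑ i, r (Xn i)‖ / L) := by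
    ring
  rw [hwN, mul_sub] at h3'
  linarith
end
end
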